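/- Let Γ be a distance-biregular graph, y ∈ V_ℓ and x ∈ V_{ℓ̂} with ℓ, ℓ̂ ∈ {0,1}. Then ν^y(x) − ν^x(y) = (n−1)·(1/k_ℓ − 1/k_{ℓ̂}); equivalently q_{ℓ,d(x,y)} = q_{ℓ̂,d(x,y)} + (n−1)·(1/k_ℓ − 1/k_{ℓ̂}). -/

import Mathlib

open Finset SimpleGraph

set_option linter.unusedSectionVars false

lemma auxfin : ∀ a b c : Fin 2, a ≠ b → c = a ∨ c = b := by decide

lemma finstep : ∀ a b : Fin 2, a ≠ b → ((b.val : ZMod 2)) = (a.val : ZMod 2) + 1 := by decide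

variable {V : Type} [Fintype V] [DecidableEq V] (G : SimpleGraph V) [DecidableRel G.Adj]

lemma walk_parity (σ : V → Fin 2) (hbip : ∀ x y : V, G.Adj x y → σ x ≠ σ y)
    {u v : V} (p : G.Walk u v) :
    ((σ v).val : ZMod 2) = ((σ u).val : ZMod 2) + p.length := by
  induction p with
  | nil => simp
  | cons h p ih =>
    rw [SimpleGraph.Walk.length_cons, ih]
    have := finstep _ _ (hbip _ _ h)
    rw [this]; push_cast; ring

lemma dist_parity (hconn : G.Connected) (σ : V → Fin 2)
    (hbip : ∀ x y : V, G.Adj x y → σ x ≠ σ y) (u v : V) :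
    ((σ v).val : ZMod 2) = ((σ u).val : ZMod 2) + G.dist u v := by
  obtain ⟨p, hp⟩ := hconn.exists_walk_length_eq_dist u v
  rw [← hp]; exact walk_parity G σ hbip p

lemma adj_dist_one (hconn : G.Connected) {z w : V} (h : G.Adj z w) : G.dist z w = 1 := by
  have h1 : G.dist z w ≤ 1 := by
    have := SimpleGraph.dist_le (SimpleGraph.Walk.cons h SimpleGraph.Walk.nil)
    simpa using this
  have h2 : G.dist z w ≠ 0 := by
    simp [hconn.dist_eq_zero_iff, h.ne]
  omega

lemma adj_dist_cases (hconn : G.Connected) (σ : V → Fin 2)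
    (hbip : ∀ x y : V, G.Adj x y → σ x ≠ σ y) (x : V) {z w : V} (h : G.Adj z w) :
    G.dist x w = G.dist x z + 1 ∨ G.dist x z = G.dist x w + 1 := by
  have t1 : G.dist x w ≤ G.dist x z + 1 := by
    have := hconn.dist_triangle (u := x) (v := z) (w := w)
    rwa [adj_dist_one G hconn h] at this
  have t2 : G.dist x z ≤ G.dist x w + 1 := by
    have := hconn.dist_triangle (u := x) (v := w) (w := z)
    rwa [adj_dist_one G hconn h.symm] at this
  have hne : G.dist x z ≠ G.dist x w := by
    intro he
    have p1 := dist_parity G hconn σ hbip x z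
    have p2 := dist_parity G hconn σ hbip x w
    have p3 := finstep _ _ (hbip _ _ h)
    rw [p1, he] at p3
    have : (0 : ZMod 2) = 1 := by linear_combination p3 - p2
    exact absurd this (by decide)
  omega

lemma exists_down (hconn : G.Connected) {x w : V} {j : ℕ} (h : G.dist x w = j + 1) :
    ∃ z, G.Adj z w ∧ G.dist x z = j := by
  obtain ⟨p, hp⟩ := hconn.exists_walk_length_eq_dist x w
  rw [h] at hp
  cases hpr : p.reverse with
  | nil =>
    exfalso
    have := congrArg SimpleGraph.Walk.length hpr
    rw [SimpleGraph.Walk.length_reverse, hp] at this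
    simp at this
  | cons hadj q =>
    rename_i z
    refine ⟨z, hadj.symm, ?_⟩
    have hlen : q.length = j := by
      have := congrArg SimpleGraph.Walk.length hpr
      rw [SimpleGraph.Walk.length_reverse, hp] at this
      simpa using this.symm
    have hle : G.dist x z ≤ j := by
      have := SimpleGraph.dist_le q.reverse
      rwa [SimpleGraph.Walk.length_reverse, hlen] at this
    have hge : j + 1 ≤ G.dist x z + 1 := by
      have := hconn.dist_triangle (u := x) (v := z) (w := w)
      rw [adj_dist_one G hconn hadj.symm, h] at this
      omega
    omega



-- ∑_z ∑_{w ~ z} F z w  =  ∑_z ∑_{w ~ z} F w z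
lemma nbr_swap (F : V → V → ℝ) :
    ∑ z : V, ∑ w ∈ G.neighborFinset z, F z w = ∑ z : V, ∑ w ∈ G.neighborFinset z, F w z := by
  have h : ∀ (Q : V → V → ℝ), ∑ z : V, ∑ w ∈ G.neighborFinset z, Q z w
      = ∑ z : V, ∑ w : V, if G.Adj z w then Q z w else 0 := by
    intro Q
    refine Finset.sum_congr rfl fun z _ => ?_
    rw [SimpleGraph.neighborFinset_eq_filter, Finset.sum_filter]
  rw [h, h, Finset.sum_comm]
  refine Finset.sum_congr rfl fun z _ => Finset.sum_congr rfl fun w _ => ?_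
  simp only [SimpleGraph.adj_comm]

lemma deg_sum (f : V → ℝ) (z : V) :
    (G.degree z : ℝ) * f z = ∑ w ∈ G.neighborFinset z, f z := by
  rw [Finset.sum_const, ← SimpleGraph.card_neighborFinset_eq_degree, nsmul_eq_mul, mul_comm]

lemma sumL (f : V → ℝ) :
    ∑ z : V, ((G.degree z : ℝ) * f z - ∑ w ∈ G.neighborFinset z, f w) = 0 := by
  rw [Finset.sum_sub_distrib]
  have h1 : ∑ z : V, (G.degree z : ℝ) * f z = ∑ z : V, ∑ w ∈ G.neighborFinset z, f z := by
    exact Finset.sum_congr rfl fun z _ => deg_sum G f z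
  rw [h1, nbr_swap G (fun z w => f z), sub_self]

lemma bilin_sym (f g : V → ℝ) :
    ∑ z : V, ((G.degree z : ℝ) * f z - ∑ w ∈ G.neighborFinset z, f w) * g z
      = ∑ z : V, f z * ((G.degree z : ℝ) * g z - ∑ w ∈ G.neighborFinset z, g w) := by
  have e1 : ∀ z : V, ((G.degree z : ℝ) * f z - ∑ w ∈ G.neighborFinset z, f w) * g z
      = (G.degree z : ℝ) * f z * g z - ∑ w ∈ G.neighborFinset z, f w * g z := by
    intro z; rw [sub_mul, Finset.sum_mul]
  have e2 : ∀ z : V, f z * ((G.degree z : ℝ) * g z - ∑ w ∈ G.neighborFinset z, g w)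
      = (G.degree z : ℝ) * f z * g z - ∑ w ∈ G.neighborFinset z, f z * g w := by
    intro z; rw [mul_sub, Finset.mul_sum]; ring_nf
  simp only [e1, e2]
  rw [Finset.sum_sub_distrib, Finset.sum_sub_distrib]
  congr 1
  exact nbr_swap G (fun z w => f w * g z)

-- harmonic implies constant along edges
lemma harmonic_edge (f : V → ℝ)
    (hf : ∀ z : V, (G.degree z : ℝ) * f z - ∑ w ∈ G.neighborFinset z, f w = 0)
    {u v : V} (huv : G.Adj u v) : f u = f v := by
  have key : ∑ z : V, ∑ w ∈ G.neighborFinset z, (f z - f w)^2 = 0 := by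
    have expand : ∀ z w : V, (f z - f w)^2 = f z * f z - 2 * (f z * f w) + f w * f w := by
      intros; ring
    simp only [expand]
    simp only [Finset.sum_add_distrib, Finset.sum_sub_distrib]
    rw [nbr_swap G (fun z w => f w * f w)]
    have hB : ∀ z : V, ∑ w ∈ G.neighborFinset z, 2 * (f z * f w)
        = 2 * ((G.degree z : ℝ) * f z * f z) := by
      intro z
      rw [← Finset.mul_sum, ← Finset.mul_sum]
      have := hf z
      have hw : ∑ w ∈ G.neighborFinset z, f w = (G.degree z : ℝ) * f z := by linarith
      rw [hw]; ring
    have hA : ∀ z : V, ∑ w ∈ G.neighborFinset z, f z * f z = (G.degree z : ℝ) * f z * f z := by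
      intro z
      rw [Finset.sum_const, ← SimpleGraph.card_neighborFinset_eq_degree, nsmul_eq_mul]; ring
    simp only [hB, hA]
    rw [← Finset.sum_sub_distrib, ← Finset.sum_add_distrib]
    exact Finset.sum_eq_zero fun z _ => by ring
  have hnn : ∀ z ∈ (Finset.univ : Finset V),
      0 ≤ ∑ w ∈ G.neighborFinset z, (f z - f w)^2 := by
    intro z _
    exact Finset.sum_nonneg fun w _ => sq_nonneg _
  have hz := (Finset.sum_eq_zero_iff_of_nonneg hnn).mp key u (Finset.mem_univ u)
  have hnn2 : ∀ w ∈ G.neighborFinset u, (0:ℝ) ≤ (f u - f w)^2 := fun w _ => sq_nonneg _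
  have := (Finset.sum_eq_zero_iff_of_nonneg hnn2).mp hz v (by simpa using huv)
  have : f u - f v = 0 := by
    exact pow_eq_zero_iff (by norm_num) |>.mp this
  linarith

lemma harmonic_const (hconn : G.Connected) (f : V → ℝ)
    (hf : ∀ z : V, (G.degree z : ℝ) * f z - ∑ w ∈ G.neighborFinset z, f w = 0)
    (u v : V) : f u = f v := by
  obtain ⟨p⟩ := hconn u v
  induction p with
  | nil => rfl
  | cons h p ih => rw [harmonic_edge G f hf h]; exact ih

lemma dist_lt_card (hconn : G.Connected) (u v : V) : G.dist u v < Fintype.card V := by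
  obtain ⟨p, hp⟩ := hconn.exists_walk_length_eq_dist u v
  calc G.dist u v ≤ p.bypass.length := SimpleGraph.dist_le _
    _ < Fintype.card V := p.bypass_isPath.length_lt



lemma double_count (σ : V → Fin 2) (c b kk : Fin 2 → ℕ → ℕ)
    (hc : ∀ (x y : V) (i : ℕ), G.dist x y = i →
      (Finset.univ.filter (fun z => G.dist x z = i - 1 ∧ G.Adj y z)).card = c (σ x) i)
    (hb : ∀ (x y : V) (i : ℕ), G.dist x y = i →
      (Finset.univ.filter (fun z => G.dist x z = i + 1 ∧ G.Adj y z)).card = b (σ x) i)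
    (hkk : ∀ (x : V) (i : ℕ),
      (Finset.univ.filter (fun y => G.dist x y = i)).card = kk (σ x) i)
    (x : V) (i : ℕ) :
    kk (σ x) (i+1) * c (σ x) (i+1) = kk (σ x) i * b (σ x) i := by
  have e1 : ∀ z : V,
      (∑ w : V, if (G.dist x z = i ∧ G.dist x w = i+1 ∧ G.Adj z w) then (1:ℕ) else 0)
      = if G.dist x z = i then b (σ x) i else 0 := by
    intro z
    by_cases hz : G.dist x z = i
    · rw [if_pos hz, ← hb x z i hz, Finset.card_filter]
      exact Finset.sum_congr rfl fun w _ => by simp [hz]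
    · simp [hz]
  have e2 : ∀ w : V,
      (∑ z : V, if (G.dist x z = i ∧ G.dist x w = i+1 ∧ G.Adj z w) then (1:ℕ) else 0)
      = if G.dist x w = i+1 then c (σ x) (i+1) else 0 := by
    intro w
    by_cases hw : G.dist x w = i + 1
    · rw [if_pos hw, ← hc x w (i+1) hw, Finset.card_filter]
      refine Finset.sum_congr rfl fun z _ => ?_
      have hadj : G.Adj w z ↔ G.Adj z w := by rw [SimpleGraph.adj_comm]
      simp [hw, Nat.add_sub_cancel, hadj, and_comm]
    · simp [hw]
  have count : ∀ (P : V → Prop) [DecidablePred P] (C : ℕ),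
      (∑ z : V, if P z then C else 0) = (Finset.univ.filter P).card * C := by
    intro P _ C
    rw [← Finset.sum_filter, Finset.sum_const, smul_eq_mul]
  have lhs1 : (∑ z : V, ∑ w : V,
      if (G.dist x z = i ∧ G.dist x w = i+1 ∧ G.Adj z w) then (1:ℕ) else 0)
      = kk (σ x) i * b (σ x) i := by
    simp only [e1]
    rw [count, hkk]
  have lhs2 : (∑ z : V, ∑ w : V,
      if (G.dist x z = i ∧ G.dist x w = i+1 ∧ G.Adj z w) then (1:ℕ) else 0)
      = kk (σ x) (i+1) * c (σ x) (i+1) := by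
    rw [Finset.sum_comm]
    simp only [e2]
    rw [count, hkk]
  rw [← lhs1, ← lhs2]

lemma Lmu (hconn : G.Connected) (σ : V → Fin 2)
    (hbip : ∀ x y : V, G.Adj x y → σ x ≠ σ y)
    (c b kk : Fin 2 → ℕ → ℕ)
    (hc : ∀ (x y : V) (i : ℕ), G.dist x y = i →
      (Finset.univ.filter (fun z => G.dist x z = i - 1 ∧ G.Adj y z)).card = c (σ x) i)
    (hb : ∀ (x y : V) (i : ℕ), G.dist x y = i →
      (Finset.univ.filter (fun z => G.dist x z = i + 1 ∧ G.Adj y z)).card = b (σ x) i)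
    (hkk : ∀ (x : V) (i : ℕ),
      (Finset.univ.filter (fun y => G.dist x y = i)).card = kk (σ x) i)
    (q : Fin 2 → ℕ → ℝ)
    (hq : ∀ (ℓ : Fin 2) (m : ℕ), q ℓ m = ∑ j ∈ Finset.Icc 1 m,
      ((Fintype.card V : ℝ) - ∑ t ∈ Finset.range j, (kk ℓ t : ℝ)) /
        ((kk ℓ j : ℝ) * (c ℓ j : ℝ)))
    (x z : V) (hzx : z ≠ x) :
    (G.degree z : ℝ) * q (σ x) (G.dist x z)
      - ∑ w ∈ G.neighborFinset z, q (σ x) (G.dist x w) = 1 := by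
  set ℓ := σ x with hl
  set n := Fintype.card V with hn
  -- q increments
  have hqsucc : ∀ m : ℕ, q ℓ (m+1) = q ℓ m +
      ((n : ℝ) - ∑ t ∈ Finset.range (m+1), (kk ℓ t : ℝ)) /
        ((kk ℓ (m+1) : ℝ) * (c ℓ (m+1) : ℝ)) := by
    intro m
    rw [hq, hq, Finset.sum_Icc_succ_top (by omega : 1 ≤ m + 1)]
  -- distance is positive
  have hipos : 1 ≤ G.dist x z := hconn.pos_dist_of_ne (Ne.symm hzx)
  obtain ⟨j, hj⟩ : ∃ j, G.dist x z = j + 1 := ⟨G.dist x z - 1, by omega⟩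
  -- neighbor splitting
  have hsplit : G.neighborFinset z =
      (Finset.univ.filter (fun w => G.dist x w = j ∧ G.Adj z w)) ∪
      (Finset.univ.filter (fun w => G.dist x w = j + 2 ∧ G.Adj z w)) := by
    ext w
    simp only [SimpleGraph.mem_neighborFinset, Finset.mem_union, Finset.mem_filter,
      Finset.mem_univ, true_and]
    constructor
    · intro hadj
      rcases adj_dist_cases G hconn σ hbip x hadj with h1 | h1
      · right; exact ⟨by omega, hadj⟩
      · left; exact ⟨by omega, hadj⟩
    · rintro (⟨_, h⟩ | ⟨_, h⟩) <;> exact h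
  have hdisj : Disjoint
      (Finset.univ.filter (fun w => G.dist x w = j ∧ G.Adj z w))
      (Finset.univ.filter (fun w => G.dist x w = j + 2 ∧ G.Adj z w)) := by
    rw [Finset.disjoint_filter]
    rintro w _ ⟨h1, _⟩ ⟨h2, _⟩
    omega
  have hcval : (Finset.univ.filter (fun w => G.dist x w = j ∧ G.Adj z w)).card
      = c ℓ (j+1) := by
    have := hc x z (j+1) hj
    simpa [Nat.add_sub_cancel] using this
  have hbval : (Finset.univ.filter (fun w => G.dist x w = j + 2 ∧ G.Adj z w)).card
      = b ℓ (j+1) := by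
    have := hb x z (j+1) hj
    simpa using this
  have hdeg : (G.degree z : ℕ) = c ℓ (j+1) + b ℓ (j+1) := by
    rw [← SimpleGraph.card_neighborFinset_eq_degree, hsplit,
      Finset.card_union_of_disjoint hdisj, hcval, hbval]
  -- sum over neighbors
  have hsum : ∑ w ∈ G.neighborFinset z, q ℓ (G.dist x w)
      = (c ℓ (j+1) : ℝ) * q ℓ j + (b ℓ (j+1) : ℝ) * q ℓ (j+2) := by
    rw [hsplit, Finset.sum_union hdisj]
    congr 1
    · rw [← hcval]
      have hcg : ∀ w ∈ Finset.univ.filter (fun w => G.dist x w = j ∧ G.Adj z w),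
          q ℓ (G.dist x w) = q ℓ j := by
        intro w hw; rw [Finset.mem_filter] at hw; rw [hw.2.1]
      rw [Finset.sum_congr rfl hcg, Finset.sum_const, nsmul_eq_mul]
    · rw [← hbval]
      have hbg : ∀ w ∈ Finset.univ.filter (fun w => G.dist x w = j + 2 ∧ G.Adj z w),
          q ℓ (G.dist x w) = q ℓ (j + 2) := by
        intro w hw; rw [Finset.mem_filter] at hw; rw [hw.2.1]
      rw [Finset.sum_congr rfl hbg, Finset.sum_const, nsmul_eq_mul]
  -- positivity facts
  have hkkpos : 0 < kk ℓ (j+1) := by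
    rw [← hkk x (j+1)]
    refine Finset.card_pos.mpr ⟨z, ?_⟩
    simp [hj]
  have hcpos : 0 < c ℓ (j+1) := by
    obtain ⟨z', hz'adj, hz'd⟩ := exists_down G hconn hj
    rw [← hcval]
    refine Finset.card_pos.mpr ⟨z', ?_⟩
    simp [hz'd, hz'adj.symm]
  rw [hj, hsum, hdeg]
  push_cast
  rw [hqsucc j]
  have hkkne : ((kk ℓ (j+1) : ℕ) : ℝ) ≠ 0 := Nat.cast_ne_zero.mpr (by omega)
  have hcne : ((c ℓ (j+1) : ℕ) : ℝ) ≠ 0 := Nat.cast_ne_zero.mpr (by omega)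
  by_cases hb0 : b ℓ (j+1) = 0
  · -- no vertices beyond distance j+1
    have hempty : ∀ w : V, G.dist x w ≠ j + 2 := by
      intro w hw
      obtain ⟨z', hadj, hd⟩ := exists_down G hconn hw
      have hcb := hb x z' (j+1) hd
      have hmem : w ∈ Finset.univ.filter (fun w' => G.dist x w' = j + 1 + 1 ∧ G.Adj z' w') := by
        simp [hadj]; omega
      have := Finset.card_pos.mpr ⟨w, hmem⟩
      rw [hcb] at this
      rw [← hl] at this
      omega
    have hub : ∀ w : V, G.dist x w ≤ j + 1 := by
      intro w
      by_contra hgt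
      push_neg at hgt
      have hdesc : ∀ s : ℕ, ∀ w : V, G.dist x w = (j + 2) + s → ∃ w', G.dist x w' = j + 2 := by
        intro s
        induction s with
        | zero => intro w h; exact ⟨w, by simpa using h⟩
        | succ s ih =>
          intro w h
          obtain ⟨z', _, hd⟩ := exists_down G hconn (show G.dist x w = ((j+2)+s)+1 by omega)
          exact ih z' hd
      obtain ⟨w', hw'⟩ := hdesc (G.dist x w - (j+2)) w (by omega)
      exact hempty w' hw'
    have hfib := Finset.card_eq_sum_card_fiberwise (f := fun w : V => G.dist x w)
      (s := Finset.univ) (t := Finset.range (j+2))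
      (fun w _ => Finset.mem_range.mpr (show G.dist x w < j + 2 by have := hub w; omega))
    have hcardn : n = ∑ t ∈ Finset.range (j+2), kk ℓ t := by
      rw [hn, ← Finset.card_univ, hfib]
      exact Finset.sum_congr rfl fun t _ => hkk x t
    have hnsum : (n : ℕ) = (∑ t ∈ Finset.range (j+1), kk ℓ t) + kk ℓ (j+1) := by
      rw [hcardn, Finset.sum_range_succ]
    have hval : (n : ℝ) - ∑ t ∈ Finset.range (j+1), (kk ℓ t : ℝ) = (kk ℓ (j+1) : ℝ) := by
      have := congrArg (fun t : ℕ => (t : ℝ)) hnsum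
      push_cast at this
      linarith
    have hbr : ((b ℓ (j+1) : ℕ) : ℝ) = 0 := by rw [hb0]; norm_num
    have hE : (c ℓ (j+1) : ℝ) *
        (((n : ℝ) - ∑ t ∈ Finset.range (j+1), (kk ℓ t : ℝ)) /
          ((kk ℓ (j+1) : ℝ) * (c ℓ (j+1) : ℝ))) = 1 := by
      rw [hval]
      field_simp
      try ring
    linear_combination hE + (q ℓ j +
      ((n : ℝ) - ∑ t ∈ Finset.range (j+1), (kk ℓ t : ℝ)) /
        ((kk ℓ (j+1) : ℝ) * (c ℓ (j+1) : ℝ)) - q ℓ (j+2)) * hbr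
  · -- b ≠ 0 case
    have hcardne : (Finset.univ.filter (fun w => G.dist x w = j + 2 ∧ G.Adj z w)).card ≠ 0 := by
      rw [hbval]; exact hb0
    obtain ⟨w, hwmem⟩ := Finset.card_pos.mp (Nat.pos_of_ne_zero hcardne)
    rw [Finset.mem_filter] at hwmem
    obtain ⟨-, hw1, hw2⟩ := hwmem
    have hkk2pos : 0 < kk ℓ (j+2) := by
      rw [← hkk x (j+2)]
      exact Finset.card_pos.mpr ⟨w, by simp [hw1]⟩
    have hc2pos : 0 < c ℓ (j+2) := by
      rw [← hc x w (j+2) hw1]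
      refine Finset.card_pos.mpr ⟨z, ?_⟩
      simp only [Finset.mem_filter, Finset.mem_univ, true_and]
      refine ⟨?_, hw2.symm⟩
      have h21 : j + 2 - 1 = j + 1 := by omega
      rw [h21]; exact hj
    have hdc := double_count G σ c b kk hc hb hkk x (j+1)
    have hdc' : ((kk ℓ (j+2) : ℕ) : ℝ) * (c ℓ (j+2) : ℝ)
        = (kk ℓ (j+1) : ℝ) * (b ℓ (j+1) : ℝ) := by
      rw [← hl] at hdc
      have : kk ℓ (j + 1 + 1) * c ℓ (j + 1 + 1) = kk ℓ (j+1) * b ℓ (j+1) := hdc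
      exact_mod_cast this
    have hq2 : q ℓ (j+2) = q ℓ (j+1) +
        ((n : ℝ) - ∑ t ∈ Finset.range (j+2), (kk ℓ t : ℝ)) /
          ((kk ℓ (j+2) : ℝ) * (c ℓ (j+2) : ℝ)) := by
      have := hqsucc (j+1)
      norm_num at this ⊢
      convert this using 2 <;> norm_num
    have hkk2ne : ((kk ℓ (j+2) : ℕ) : ℝ) ≠ 0 := Nat.cast_ne_zero.mpr (by omega)
    have hc2ne : ((c ℓ (j+2) : ℕ) : ℝ) ≠ 0 := Nat.cast_ne_zero.mpr (by omega)
    have hbne : ((b ℓ (j+1) : ℕ) : ℝ) ≠ 0 := Nat.cast_ne_zero.mpr hb0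
    have hS2 : ∑ t ∈ Finset.range (j+2), (kk ℓ t : ℝ)
        = (∑ t ∈ Finset.range (j+1), (kk ℓ t : ℝ)) + (kk ℓ (j+1) : ℝ) := by
      rw [Finset.sum_range_succ]
    set S : ℝ := ∑ t ∈ Finset.range (j+1), (kk ℓ t : ℝ) with hSdef
    set E : ℝ := ((n : ℝ) - S) / ((kk ℓ (j+1) : ℝ) * (c ℓ (j+1) : ℝ)) with hEdef
    set B : ℝ := ((n : ℝ) - ∑ t ∈ Finset.range (j+2), (kk ℓ t : ℝ)) /
          ((kk ℓ (j+2) : ℝ) * (c ℓ (j+2) : ℝ)) with hBdef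
    have h1 : (c ℓ (j+1) : ℝ) * E * (kk ℓ (j+1) : ℝ) = (n : ℝ) - S := by
      rw [hEdef]
      field_simp
      try ring
    have h2 : (b ℓ (j+1) : ℝ) * B * (kk ℓ (j+1) : ℝ) = (n : ℝ) - S - (kk ℓ (j+1) : ℝ) := by
      rw [hBdef, hS2, hdc']
      field_simp
      try ring
    have key : (c ℓ (j+1) : ℝ) * E - (b ℓ (j+1) : ℝ) * B = 1 := by
      have h3 : ((c ℓ (j+1) : ℝ) * E - (b ℓ (j+1) : ℝ) * B) * (kk ℓ (j+1) : ℝ)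
          = 1 * (kk ℓ (j+1) : ℝ) := by
        rw [sub_mul, h1, h2]; ring
      exact mul_right_cancel₀ hkkne h3
    have hq1' : q ℓ (j+1) = q ℓ j + E := by rw [hEdef, hSdef]; exact hqsucc j
    rw [hq2, hq1']
    linear_combination key

lemma radial (hconn : G.Connected) (σ : V → Fin 2)
    (hbip : ∀ x y : V, G.Adj x y → σ x ≠ σ y)
    (c b kk : Fin 2 → ℕ → ℕ)
    (hc : ∀ (x y : V) (i : ℕ), G.dist x y = i →
      (Finset.univ.filter (fun z => G.dist x z = i - 1 ∧ G.Adj y z)).card = c (σ x) i)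
    (hb : ∀ (x y : V) (i : ℕ), G.dist x y = i →
      (Finset.univ.filter (fun z => G.dist x z = i + 1 ∧ G.Adj y z)).card = b (σ x) i)
    (hkk : ∀ (x : V) (i : ℕ),
      (Finset.univ.filter (fun y => G.dist x y = i)).card = kk (σ x) i)
    (ν : V → V → ℝ)
    (hν0 : ∀ x : V, ν x x = 0)
    (hνL : ∀ x y : V, y ≠ x →
      (G.degree y : ℝ) * ν x y - ∑ z ∈ G.neighborFinset y, ν x z = 1)
    (q : Fin 2 → ℕ → ℝ)
    (hq : ∀ (ℓ : Fin 2) (m : ℕ), q ℓ m = ∑ j ∈ Finset.Icc 1 m,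
      ((Fintype.card V : ℝ) - ∑ t ∈ Finset.range j, (kk ℓ t : ℝ)) /
        ((kk ℓ j : ℝ) * (c ℓ j : ℝ)))
    (x z : V) : ν x z = q (σ x) (G.dist x z) := by
  set f : V → ℝ := fun u => ν x u - q (σ x) (G.dist x u) with hf
  have hq0 : q (σ x) 0 = 0 := by rw [hq]; simp
  have hLf' : ∀ u : V, u ≠ x →
      (G.degree u : ℝ) * f u - ∑ w ∈ G.neighborFinset u, f w = 0 := by
    intro u hu
    have h1 := hνL x u hu
    have h2 := Lmu G hconn σ hbip c b kk hc hb hkk q hq x u hu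
    simp only [hf]
    rw [Finset.sum_sub_distrib]
    ring_nf
    ring_nf at h1 h2
    linarith
  have hLf : ∀ u : V,
      (G.degree u : ℝ) * f u - ∑ w ∈ G.neighborFinset u, f w = 0 := by
    intro u
    by_cases hu : u = x
    · subst hu
      have hsum := sumL G f
      rw [Finset.sum_eq_single_of_mem u (Finset.mem_univ u)
        (fun v _ hv => hLf' v hv)] at hsum
      exact hsum
    · exact hLf' u hu
  have hcst := harmonic_const G hconn f hLf z x
  have : f x = 0 := by
    simp only [hf]
    rw [SimpleGraph.dist_self, hq0, hν0]
    ring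
  have := hcst.trans this
  simp only [hf] at this
  linarith

lemma Ssum (hcard : 2 ≤ Fintype.card V)
    (ν : V → V → ℝ)
    (hνL : ∀ x y : V, y ≠ x →
      (G.degree y : ℝ) * ν x y - ∑ z ∈ G.neighborFinset y, ν x z = 1)
    (x y : V) :
    (Fintype.card V : ℝ) * (ν y x - ν x y) = (∑ z : V, ν y z) - (∑ z : V, ν x z) := by
  set n := Fintype.card V with hn
  have Lxx : ∀ x : V, (G.degree x : ℝ) * ν x x - ∑ w ∈ G.neighborFinset x, ν x w
      = -((n : ℝ) - 1) := by
    intro x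
    have hsum := sumL G (ν x)
    have hsplit := Finset.sum_erase_add Finset.univ
      (fun z => (G.degree z : ℝ) * ν x z - ∑ w ∈ G.neighborFinset z, ν x w)
      (Finset.mem_univ x)
    rw [hsum] at hsplit
    have herase : ∑ z ∈ Finset.univ.erase x,
        ((G.degree z : ℝ) * ν x z - ∑ w ∈ G.neighborFinset z, ν x w) = (n : ℝ) - 1 := by
      rw [Finset.sum_congr rfl (fun z hz => hνL x z (Finset.ne_of_mem_erase hz)),
        Finset.sum_const, Finset.card_erase_of_mem (Finset.mem_univ x),
        Finset.card_univ, nsmul_eq_mul, mul_one]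
      rw [Nat.cast_sub (by omega)]
      norm_num
      rfl
    rw [herase] at hsplit
    linarith
  have eval : ∀ u w : V, ∑ z : V,
      ((G.degree z : ℝ) * ν u z - ∑ v ∈ G.neighborFinset z, ν u v) * ν w z
      = (∑ z : V, ν w z) - (n : ℝ) * ν w u := by
    intro u w
    have hsplit := Finset.sum_erase_add Finset.univ
      (fun z => ((G.degree z : ℝ) * ν u z - ∑ v ∈ G.neighborFinset z, ν u v) * ν w z)
      (Finset.mem_univ u)
    rw [← hsplit]
    have herase : ∑ z ∈ Finset.univ.erase u,
        ((G.degree z : ℝ) * ν u z - ∑ v ∈ G.neighborFinset z, ν u v) * ν w z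
        = ∑ z ∈ Finset.univ.erase u, ν w z := by
      refine Finset.sum_congr rfl fun z hz => ?_
      rw [hνL u z (Finset.ne_of_mem_erase hz), one_mul]
    rw [herase, Lxx u]
    have : ∑ z ∈ Finset.univ.erase u, ν w z = (∑ z : V, ν w z) - ν w u := by
      have := Finset.sum_erase_add Finset.univ (fun z => ν w z) (Finset.mem_univ u)
      linarith
    rw [this]
    ring
  have hbs := bilin_sym G (ν x) (ν y)
  have e1 := eval x y
  have e2' : ∑ z : V, ν x z * ((G.degree z : ℝ) * ν y z - ∑ v ∈ G.neighborFinset z, ν y v)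
      = (∑ z : V, ν x z) - (n : ℝ) * ν x y := by
    rw [← eval y x]
    exact Finset.sum_congr rfl fun z _ => by ring
  rw [e1, e2'] at hbs
  linarith

theorem stmt9 {V : Type} [Fintype V] [DecidableEq V]
    (G : SimpleGraph V) [DecidableRel G.Adj]
    (hconn : G.Connected) (hcard : 2 ≤ Fintype.card V)
    (σ : V → Fin 2)
    (hbip : ∀ x y : V, G.Adj x y → σ x ≠ σ y)
    (k : Fin 2 → ℕ)
    (hdeg : ∀ x : V, G.degree x = k (σ x))
    (c b : Fin 2 → ℕ → ℕ)
    (hc : ∀ (x y : V) (i : ℕ), G.dist x y = i →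
      (Finset.univ.filter (fun z => G.dist x z = i - 1 ∧ G.Adj y z)).card = c (σ x) i)
    (hb : ∀ (x y : V) (i : ℕ), G.dist x y = i →
      (Finset.univ.filter (fun z => G.dist x z = i + 1 ∧ G.Adj y z)).card = b (σ x) i)
    (D : Fin 2 → ℕ)
    (hDub : ∀ x y : V, G.dist x y ≤ D (σ x))
    (hDmax : ∀ ℓ : Fin 2, ∃ x y : V, σ x = ℓ ∧ G.dist x y = D ℓ)
    (hD0 : 1 ≤ D 0) (hD01 : D 0 ≤ D 1)
    (kk : Fin 2 → ℕ → ℕ)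
    (hkk : ∀ (x : V) (i : ℕ),
      (Finset.univ.filter (fun y => G.dist x y = i)).card = kk (σ x) i)
    (ν : V → V → ℝ)
    (hν0 : ∀ x : V, ν x x = 0)
    (hνL : ∀ x y : V, y ≠ x →
      (G.degree y : ℝ) * ν x y - ∑ z ∈ G.neighborFinset y, ν x z = 1)
    (q : Fin 2 → ℕ → ℝ)
    (hq : ∀ (ℓ : Fin 2) (m : ℕ), q ℓ m = ∑ j ∈ Finset.Icc 1 m,
      ((Fintype.card V : ℝ) - ∑ t ∈ Finset.range j, (kk ℓ t : ℝ)) /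
        ((kk ℓ j : ℝ) * (c ℓ j : ℝ))) :
    ∀ x y : V,
      ν y x - ν x y =
        ((Fintype.card V : ℝ) - 1) * (1 / (k (σ y) : ℝ) - 1 / (k (σ x) : ℝ)) ∧
      q (σ y) (G.dist x y) = q (σ x) (G.dist x y) +
        ((Fintype.card V : ℝ) - 1) * (1 / (k (σ y) : ℝ) - 1 / (k (σ x) : ℝ)) := by
  have hrad : ∀ x z : V, ν x z = q (σ x) (G.dist x z) :=
    radial G hconn σ hbip c b kk hc hb hkk ν hν0 hνL q hq
  -- an edge
  obtain ⟨u, v, huv⟩ : ∃ u v : V, G.Adj u v := by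
    obtain ⟨u, v, hne⟩ := Fintype.exists_pair_of_one_lt_card (α := V) (by omega)
    obtain ⟨p⟩ := hconn u v
    cases p with
    | nil => exact absurd rfl hne
    | cons h _ => exact ⟨_, _, h⟩
  -- basic parameters
  have kk0 : ∀ u : V, kk (σ u) 0 = 1 := by
    intro u
    rw [← hkk u 0]
    have : Finset.univ.filter (fun y => G.dist u y = 0) = {u} := by
      ext y
      simp [hconn.dist_eq_zero_iff, eq_comm]
    rw [this, Finset.card_singleton]
  have kk1 : ∀ u : V, kk (σ u) 1 = k (σ u) := by
    intro u
    rw [← hkk u 1, ← hdeg u, ← SimpleGraph.card_neighborFinset_eq_degree]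
    congr 1
    ext y
    simp only [Finset.mem_filter, Finset.mem_univ, true_and, SimpleGraph.mem_neighborFinset]
    constructor
    · intro hd
      obtain ⟨z, hz1, hz2⟩ := exists_down G hconn (show G.dist u y = 0 + 1 by omega)
      have : z = u := by rwa [hconn.dist_eq_zero_iff, eq_comm] at hz2
      rw [this] at hz1
      exact hz1
    · exact fun h => adj_dist_one G hconn h
  have c1 : ∀ u v : V, G.Adj u v → c (σ u) 1 = 1 := by
    intro u v huv
    rw [← hc u v 1 (adj_dist_one G hconn huv)]
    have : Finset.univ.filter (fun z => G.dist u z = 1 - 1 ∧ G.Adj v z) = {u} := by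
      ext z
      simp only [Finset.mem_filter, Finset.mem_univ, true_and, Finset.mem_singleton]
      constructor
      · intro ⟨h1, _⟩
        have : G.dist u z = 0 := by simpa using h1
        rwa [hconn.dist_eq_zero_iff, eq_comm] at this
      · intro h
        subst h
        exact ⟨by simp [SimpleGraph.dist_self], huv.symm⟩
    rw [this, Finset.card_singleton]
  have q1 : ∀ u v : V, G.Adj u v → q (σ u) 1 = ((Fintype.card V : ℝ) - 1) / (k (σ u) : ℝ) := by
    intro u v huv
    rw [hq]
    rw [show Finset.Icc 1 1 = {1} by rfl, Finset.sum_singleton]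
    rw [Finset.range_one, Finset.sum_singleton, kk0 u, kk1 u, c1 u v huv]
    norm_num
  -- total mass depends only on the side
  have hSval : ∀ u : V, ∑ z : V, ν u z
      = ∑ t ∈ Finset.range (Fintype.card V), (kk (σ u) t : ℝ) * q (σ u) t := by
    intro u
    have hmaps : ∀ z ∈ (Finset.univ : Finset V),
        G.dist u z ∈ Finset.range (Fintype.card V) :=
      fun z _ => Finset.mem_range.mpr (dist_lt_card G hconn u z)
    have hfib := Finset.sum_fiberwise_of_maps_to hmaps (fun z => ν u z)
    rw [← hfib]
    refine Finset.sum_congr rfl fun t _ => ?_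
    have : ∀ z ∈ Finset.univ.filter (fun z => G.dist u z = t), ν u z = q (σ u) t := by
      intro z hz
      rw [Finset.mem_filter] at hz
      rw [hrad u z, hz.2]
    rw [Finset.sum_congr rfl this, Finset.sum_const, nsmul_eq_mul, hkk u t]
  have hanti := Ssum G hcard ν hνL
  -- base difference from the edge
  have base : (∑ t ∈ Finset.range (Fintype.card V), (kk (σ v) t : ℝ) * q (σ v) t)
      - (∑ t ∈ Finset.range (Fintype.card V), (kk (σ u) t : ℝ) * q (σ u) t)
      = (Fintype.card V : ℝ) * (((Fintype.card V : ℝ) - 1)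
        * (1 / (k (σ v) : ℝ) - 1 / (k (σ u) : ℝ))) := by
    have h1 := hanti u v
    rw [hSval u, hSval v] at h1
    rw [← h1]
    have e1 : ν v u = ((Fintype.card V : ℝ) - 1) / (k (σ v) : ℝ) := by
      rw [hrad v u, adj_dist_one G hconn huv.symm, q1 v u huv.symm]
    have e2 : ν u v = ((Fintype.card V : ℝ) - 1) / (k (σ u) : ℝ) := by
      rw [hrad u v, adj_dist_one G hconn huv, q1 u v huv]
    rw [e1, e2]
    ring
  -- difference of total masses for arbitrary sides
  have hM : ∀ x y : V,
      (∑ t ∈ Finset.range (Fintype.card V), (kk (σ y) t : ℝ) * q (σ y) t)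
      - (∑ t ∈ Finset.range (Fintype.card V), (kk (σ x) t : ℝ) * q (σ x) t)
      = (Fintype.card V : ℝ) * (((Fintype.card V : ℝ) - 1)
        * (1 / (k (σ y) : ℝ) - 1 / (k (σ x) : ℝ))) := by
    intro x y
    by_cases hxy : σ x = σ y
    · rw [hxy]
      ring
    · rcases auxfin (σ u) (σ v) (σ x) (hbip u v huv) with hx | hx <;>
        rcases auxfin (σ u) (σ v) (σ y) (hbip u v huv) with hy | hy
      · rw [hx, hy] at hxy; exact absurd rfl hxy
      · rw [hx, hy]
        linear_combination base
      · rw [hx, hy]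
        linear_combination -base
      · rw [hx, hy] at hxy; exact absurd rfl hxy
  intro x y
  have hnne : (Fintype.card V : ℝ) ≠ 0 := by
    have : (2 : ℝ) ≤ (Fintype.card V : ℝ) := by exact_mod_cast hcard
    linarith
  have first : ν y x - ν x y =
      ((Fintype.card V : ℝ) - 1) * (1 / (k (σ y) : ℝ) - 1 / (k (σ x) : ℝ)) := by
    have h1 := hanti x y
    rw [hSval x, hSval y, hM x y] at h1
    exact mul_left_cancel₀ hnne h1
  refine ⟨first, ?_⟩
  have e1 : ν y x = q (σ y) (G.dist x y) := by
    rw [hrad y x, SimpleGraph.dist_comm]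
  have e2 : ν x y = q (σ x) (G.dist x y) := hrad x y
  rw [e1, e2] at first
  linarith
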